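/- Topological Higman lemma: if (Σ, θ) is a Noetherian topological space, then Σ* endowed with the subword topology, generated by the sets Σ*U₁Σ*⋯Σ*U_nΣ* for U_i open in θ, is Noetherian. -/

import Mathlib

/-- A topology is Noetherian when every subset is compact. -/
def Noeth {X : Type*} (t : TopologicalSpace X) : Prop :=
  ∀ s : Set X, @IsCompact X t s

/-- Concatenation of sets of words: `UV = { uv : u ∈ U, v ∈ V }`. -/
def cat {α : Type*} (U V : Set (List α)) : Set (List α) :=
  {w | ∃ u ∈ U, ∃ v ∈ V, w = u ++ v}

/-- A set of letters viewed as a set of length-1 words. -/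
def lift1 {α : Type*} (U : Set α) : Set (List α) :=
  {w | ∃ a ∈ U, w = [a]}


/-- The set of words `Σ* U₁ Σ* U₂ ⋯ Σ* Uₙ Σ*`. -/
def openword {α : Type*} (L : List (Set α)) : Set (List α) :=
  L.foldr (fun U acc => cat Set.univ (cat (lift1 U) acc)) Set.univ

/-- The subword topology on `Σ*`. -/
def subwordTop {α : Type*} (θ : TopologicalSpace α) : TopologicalSpace (List α) :=
  TopologicalSpace.generateFrom
    {V | ∃ L : List (Set α), (∀ U ∈ L, θ.IsOpen U) ∧ V = openword L}

namespace Hig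

open Set Filter TopologicalSpace

variable {α : Type*}

theorem mem_openword_nil (w : List α) : w ∈ openword ([] : List (Set α)) :=
  Set.mem_univ w

theorem mem_openword_cons {U : Set α} {L : List (Set α)} {w : List α} :
    w ∈ openword (U :: L) ↔ ∃ p a r, a ∈ U ∧ r ∈ openword L ∧ w = p ++ a :: r := by
  constructor
  · rintro ⟨p, -, q, ⟨u, ⟨a, ha, rfl⟩, r, hr, rfl⟩, rfl⟩
    exact ⟨p, a, r, ha, hr, rfl⟩
  · rintro ⟨p, a, r, ha, hr, rfl⟩
    exact ⟨p, trivial, [a] ++ r, ⟨[a], ⟨a, ha, rfl⟩, r, hr, rfl⟩, rfl⟩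

theorem cons_sublist_decomp {a : α} {l w : List α} (h : (a :: l).Sublist w) :
    ∃ p r, w = p ++ a :: r ∧ l.Sublist r := by
  induction w with
  | nil => cases h
  | cons b w ih =>
    cases h with
    | cons _ h' =>
      obtain ⟨p, r, rfl, hr⟩ := ih h'
      exact ⟨b :: p, r, rfl, hr⟩
    | cons_cons _ h' => exact ⟨[], w, rfl, h'⟩

theorem sublist_cons_cases {a : α} {l v : List α} (h : l.Sublist (a :: v)) :
    l.Sublist v ∨ ∃ l', l = a :: l' ∧ l'.Sublist v := by
  cases h with
  | cons _ h' => exact Or.inl h'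
  | cons_cons _ h' => exact Or.inr ⟨_, rfl, h'⟩

theorem mem_openword_iff {L : List (Set α)} {w : List α} :
    w ∈ openword L ↔ ∃ l, l.Sublist w ∧ List.Forall₂ (· ∈ ·) l L := by
  induction L generalizing w with
  | nil =>
    simp only [mem_openword_nil, true_iff]
    exact ⟨[], List.nil_sublist w, List.Forall₂.nil⟩
  | cons U L ih =>
    constructor
    · intro h
      obtain ⟨p, a, r, ha, hr, rfl⟩ := mem_openword_cons.mp h
      obtain ⟨l, hl, hF⟩ := ih.mp hr
      exact ⟨a :: l, ((hl.cons₂ a).trans (List.sublist_append_right p (a :: r))),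
        List.Forall₂.cons ha hF⟩
    · rintro ⟨l, hl, hF⟩
      cases hF with
      | cons ha hF' =>
        obtain ⟨p, r, rfl, hr⟩ := cons_sublist_decomp hl
        exact mem_openword_cons.mpr ⟨p, _, r, ha, ih.mpr ⟨_, hr, hF'⟩, rfl⟩

theorem mem_openword_of_sublist {L : List (Set α)} {u w : List α} (hs : u.Sublist w)
    (h : u ∈ openword L) : w ∈ openword L := by
  obtain ⟨l, hl, hF⟩ := mem_openword_iff.mp h
  exact mem_openword_iff.mpr ⟨l, hl.trans hs, hF⟩

theorem cons_mem_openword_cases {a : α} {v : List α} {L : List (Set α)}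
    (h : (a :: v) ∈ openword L) :
    v ∈ openword L ∨ ∃ U L', L = U :: L' ∧ a ∈ U ∧ v ∈ openword L' := by
  obtain ⟨l, hl, hF⟩ := mem_openword_iff.mp h
  rcases sublist_cons_cases hl with h' | ⟨l', rfl, hl'⟩
  · exact Or.inl (mem_openword_iff.mpr ⟨l, h', hF⟩)
  · cases hF with
    | cons ha hF' => exact Or.inr ⟨_, _, rfl, ha, mem_openword_iff.mpr ⟨_, hl', hF'⟩⟩

theorem cons_mem_openword_cons {a : α} {v : List α} {U : Set α} {L : List (Set α)}
    (ha : a ∈ U) (hv : v ∈ openword L) : (a :: v) ∈ openword (U :: L) :=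
  mem_openword_cons.mpr ⟨[], a, v, ha, hv, rfl⟩

theorem cons_mem_openword_of_mem {a : α} {v : List α} {L : List (Set α)}
    (hv : v ∈ openword L) : (a :: v) ∈ openword L :=
  mem_openword_of_sublist (List.sublist_cons_self a v) hv

theorem eq_nil_of_nil_mem {L : List (Set α)} (h : ([] : List α) ∈ openword L) : L = [] := by
  obtain ⟨l, hl, hF⟩ := mem_openword_iff.mp h
  rw [List.sublist_nil] at hl
  subst hl
  cases hF
  rfl


/-- if the tail part lands in `openword L`, so does the whole word. -/
theorem openword_cons_subset_of {U : Set α} {M L : List (Set α)}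
    (h : openword M ⊆ openword L) : openword (U :: M) ⊆ openword L := by
  intro u hu
  obtain ⟨p, a, r, _, hr, rfl⟩ := mem_openword_cons.mp hu
  exact mem_openword_of_sublist ((List.sublist_cons_self a r).trans
    (List.sublist_append_right p (a :: r))) (h hr)

theorem openword_cons_mono {U U' : Set α} {M L : List (Set α)} (hU : U ⊆ U')
    (h : openword M ⊆ openword L) : openword (U :: M) ⊆ openword (U' :: L) := by
  intro u hu
  obtain ⟨p, a, r, ha, hr, rfl⟩ := mem_openword_cons.mp hu
  exact mem_openword_cons.mpr ⟨p, a, r, hU ha, h hr, rfl⟩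

/-- merge lemma: basic opens are closed under intersection, up to refinement. -/
theorem merge_openword (θ : TopologicalSpace α) :
    ∀ (w : List α) (L L' : List (Set α)), (∀ V ∈ L, θ.IsOpen V) → (∀ V ∈ L', θ.IsOpen V) →
    w ∈ openword L → w ∈ openword L' →
    ∃ M : List (Set α), (∀ V ∈ M, θ.IsOpen V) ∧ w ∈ openword M ∧
      openword M ⊆ openword L ∩ openword L' := by
  intro w
  induction w with
  | nil =>
    intro L L' _ _ h h'
    rw [eq_nil_of_nil_mem h, eq_nil_of_nil_mem h']
    exact ⟨[], by simp, mem_openword_nil _, fun u hu => ⟨mem_openword_nil u, mem_openword_nil u⟩⟩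
  | cons a v ih =>
    intro L L' hL hL' h h'
    rcases cons_mem_openword_cases h with hv | ⟨U, L₁, rfl, haU, hv⟩ <;>
      rcases cons_mem_openword_cases h' with hv' | ⟨U', L₁', rfl, haU', hv'⟩
    · obtain ⟨M, hM, hwM, hsub⟩ := ih L L' hL hL' hv hv'
      exact ⟨M, hM, cons_mem_openword_of_mem hwM, hsub⟩
    · obtain ⟨M, hM, hwM, hsub⟩ := ih L L₁' hL (fun V hV => hL' V (List.mem_cons_of_mem _ hV)) hv hv'
      refine ⟨U' :: M, ?_, cons_mem_openword_cons haU' hwM, fun u hu => ?_⟩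
      · intro V hV
        rcases List.mem_cons.mp hV with rfl | hV
        · exact hL' V List.mem_cons_self
        · exact hM V hV
      · constructor
        · exact openword_cons_subset_of (fun x hx => (hsub hx).1) hu
        · exact openword_cons_mono (subset_refl U') (fun x hx => (hsub hx).2) hu
    · obtain ⟨M, hM, hwM, hsub⟩ := ih L₁ L' (fun V hV => hL V (List.mem_cons_of_mem _ hV)) hL' hv hv'
      refine ⟨U :: M, ?_, cons_mem_openword_cons haU hwM, fun u hu => ?_⟩
      · intro V hV
        rcases List.mem_cons.mp hV with rfl | hV
        · exact hL V List.mem_cons_self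
        · exact hM V hV
      · constructor
        · exact openword_cons_mono (subset_refl U) (fun x hx => (hsub hx).1) hu
        · exact openword_cons_subset_of (fun x hx => (hsub hx).2) hu
    · obtain ⟨M, hM, hwM, hsub⟩ := ih L₁ L₁' (fun V hV => hL V (List.mem_cons_of_mem _ hV))
        (fun V hV => hL' V (List.mem_cons_of_mem _ hV)) hv hv'
      refine ⟨(U ∩ U') :: M, ?_, cons_mem_openword_cons ⟨haU, haU'⟩ hwM, fun u hu => ?_⟩
      · intro V hV
        rcases List.mem_cons.mp hV with rfl | hV
        · exact @IsOpen.inter _ θ _ _ (hL U List.mem_cons_self) (hL' U' List.mem_cons_self)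
        · exact hM V hV
      · constructor
        · exact openword_cons_mono Set.inter_subset_left (fun x hx => (hsub hx).1) hu
        · exact openword_cons_mono Set.inter_subset_right (fun x hx => (hsub hx).2) hu

/-- every open set of the subword topology contains a basic open around each point. -/
theorem exists_basic (θ : TopologicalSpace α) {O : Set (List α)}
    (hO : (subwordTop θ).IsOpen O) :
    ∀ w ∈ O, ∃ M : List (Set α), (∀ V ∈ M, θ.IsOpen V) ∧ w ∈ openword M ∧ openword M ⊆ O := by
  have hO' : TopologicalSpace.GenerateOpen
      {V | ∃ L : List (Set α), (∀ U ∈ L, θ.IsOpen U) ∧ V = openword L} O := hO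
  clear hO
  induction hO' with
  | basic V hV =>
    obtain ⟨L, hL, rfl⟩ := hV
    exact fun w hw => ⟨L, hL, hw, subset_rfl⟩
  | univ => exact fun w _ => ⟨[], by simp, mem_openword_nil _, subset_univ _⟩
  | inter O₁ O₂ h₁ h₂ ih₁ ih₂ =>
    intro w hw
    obtain ⟨M₁, hM₁, hw₁, hs₁⟩ := ih₁ w hw.1
    obtain ⟨M₂, hM₂, hw₂, hs₂⟩ := ih₂ w hw.2
    obtain ⟨M, hM, hwM, hsub⟩ := merge_openword θ w M₁ M₂ hM₁ hM₂ hw₁ hw₂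
    exact ⟨M, hM, hwM, fun u hu => ⟨hs₁ (hsub hu).1, hs₂ (hsub hu).2⟩⟩
  | sUnion S hS ih =>
    rintro w ⟨t, ht, hw⟩
    obtain ⟨M, hM, hwM, hsub⟩ := ih t ht w hw
    exact ⟨M, hM, hwM, hsub.trans (subset_sUnion_of_mem ht)⟩


/-- In a Noetherian space, almost every index of a sequence (w.r.t. the hyperfilter)
is a cluster index. -/
theorem exists_cluster_set (θ : TopologicalSpace α) (hθ : Noeth θ) (b : ℕ → α) :
    ∃ S₀ ∈ hyperfilter ℕ, ∀ n ∈ S₀, ∀ U : Set α, θ.IsOpen U → b n ∈ U →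
      {j | b j ∈ U} ∈ hyperfilter ℕ := by
  letI := θ
  haveI hN : NoetherianSpace α := (noetherianSpace_iff_opens α).mpr fun s => hθ s
  have hwf : WellFounded ((· > ·) : Opens α → Opens α → Prop) := wellFounded_gt
  set F : Set (Opens α) :=
    {O | ∃ S ∈ hyperfilter ℕ, (O : Set α) = (closure (b '' S))ᶜ} with hF
  have hne : F.Nonempty :=
    ⟨⟨(closure (b '' univ))ᶜ, isClosed_closure.isOpen_compl⟩, univ, univ_mem, rfl⟩
  obtain ⟨O, hOF, hmax⟩ := hwf.has_min F hne
  obtain ⟨S₀, hS₀, hOeq⟩ := hOF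
  refine ⟨S₀, hS₀, fun n hn U hU hbn => ?_⟩
  by_contra hT
  have hSc : {j | b j ∈ U}ᶜ ∈ hyperfilter ℕ := Ultrafilter.compl_mem_iff_notMem.mpr hT
  set S : Set ℕ := {j | b j ∈ U}ᶜ ∩ S₀ with hSdef
  have hS : S ∈ hyperfilter ℕ := inter_mem hSc hS₀
  set O' : Opens α := ⟨(closure (b '' S))ᶜ, isClosed_closure.isOpen_compl⟩ with hO'
  have hsub : (O : Set α) ⊆ (O' : Set α) := by
    rw [hOeq]
    exact compl_subset_compl.mpr (closure_mono (image_mono (f := b) inter_subset_right))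
  have hle : O ≤ O' := hsub
  have hnot : ¬O < O' := fun hlt => hmax O' ⟨S, hS, rfl⟩ hlt
  have heq : O = O' := (lt_or_eq_of_le hle).resolve_left hnot
  have hclos : closure (b '' S) = closure (b '' S₀) := by
    apply compl_injective
    have h1 : (O' : Set α) = (closure (b '' S))ᶜ := rfl
    rw [← h1, ← heq, hOeq]
  have hbncl : b n ∈ closure (b '' S) := by
    rw [hclos]; exact subset_closure ⟨n, hn, rfl⟩
  rw [mem_closure_iff] at hbncl
  obtain ⟨x, hxU, j, hjS, rfl⟩ := hbncl U hU hbn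
  exact hjS.1 hxU

/-- Greedy extraction of a subsequence whose letters are pairwise "clustered". -/
theorem greedy (θ : TopologicalSpace α) (hθ : Noeth θ) (b : ℕ → α) (V : ℕ → Set α)
    (hVo : ∀ n, θ.IsOpen (V n)) (hbV : ∀ n, b n ∈ V n) :
    ∃ φ : ℕ → ℕ, StrictMono φ ∧ ∀ l k, l < k → b (φ k) ∈ V (φ l) := by
  classical
  obtain ⟨S₀, hS₀, hcl⟩ := exists_cluster_set θ hθ b
  set St := {p : ℕ × Set ℕ // p.1 ∈ S₀ ∧ p.2 ∈ hyperfilter ℕ ∧ p.2 ⊆ S₀ ∧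
    ∀ j ∈ p.2, p.1 < j ∧ b j ∈ V p.1} with hSt
  have tail_mem : ∀ n : ℕ, {j | n < j} ∈ hyperfilter ℕ := by
    intro n
    have : {j | n < j} = {j : ℕ | j ≤ n}ᶜ := by ext j; simp [Nat.not_le]
    rw [this]
    exact (Set.finite_Iic n).compl_mem_hyperfilter
  have hstep : ∀ st : St, ∃ st' : St, st'.1.2 ⊆ st.1.2 ∧ st'.1.1 ∈ st.1.2 := by
    rintro ⟨⟨n, T⟩, hn, hT, hTS, hTp⟩
    obtain ⟨m, hm⟩ := Filter.nonempty_of_mem hT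
    have hmS₀ : m ∈ S₀ := hTS hm
    have hcl' : {j | b j ∈ V m} ∈ hyperfilter ℕ := hcl m hmS₀ (V m) (hVo m) (hbV m)
    refine ⟨⟨⟨m, T ∩ {j | b j ∈ V m} ∩ {j | m < j}⟩, hmS₀,
      inter_mem (inter_mem hT hcl') (tail_mem m),
      fun j hj => hTS hj.1.1, fun j hj => ⟨hj.2, hj.1.2⟩⟩, ?_, hm⟩
    exact fun j hj => hj.1.1
  choose step hstep1 hstep2 using hstep
  -- initial state
  obtain ⟨n₀, hn₀⟩ := Filter.nonempty_of_mem hS₀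
  have hcl0 : {j | b j ∈ V n₀} ∈ hyperfilter ℕ := hcl n₀ hn₀ (V n₀) (hVo n₀) (hbV n₀)
  let init : St := ⟨⟨n₀, S₀ ∩ {j | b j ∈ V n₀} ∩ {j | n₀ < j}⟩, hn₀,
    inter_mem (inter_mem hS₀ hcl0) (tail_mem n₀),
    fun j hj => hj.1.1, fun j hj => ⟨hj.2, hj.1.2⟩⟩
  let f : ℕ → St := fun k => Nat.rec init (fun _ st => step st) k
  have hfs : ∀ k, f (k + 1) = step (f k) := fun k => rfl
  have hmemT : ∀ k, (f (k + 1)).1.1 ∈ (f k).1.2 := fun k => by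
    rw [hfs]; exact hstep2 (f k)
  have hsubT : ∀ k, (f (k + 1)).1.2 ⊆ (f k).1.2 := fun k => by
    rw [hfs]; exact hstep1 (f k)
  have hchain : ∀ l k, l ≤ k → (f k).1.2 ⊆ (f l).1.2 := by
    intro l k hlk
    induction k with
    | zero => cases Nat.le_zero.mp hlk; exact subset_rfl
    | succ k ih =>
      rcases Nat.lt_or_ge l (k + 1) with h | h
      · exact (hsubT k).trans (ih (Nat.lt_succ_iff.mp h))
      · have : l = k + 1 := le_antisymm hlk h
        subst this; exact subset_rfl
  set φ : ℕ → ℕ := fun k => (f k).1.1 with hφ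
  have hkey : ∀ l k, l < k → φ k ∈ (f l).1.2 := by
    intro l k hlk
    have hpos : 0 < k := Nat.lt_of_le_of_lt (Nat.zero_le l) hlk
    have h1 : (f ((k - 1) + 1)).1.1 ∈ (f (k - 1)).1.2 := hmemT (k - 1)
    rw [Nat.sub_add_cancel hpos] at h1
    exact hchain l (k - 1) (Nat.le_pred_of_lt hlk) h1
  have hmono : StrictMono φ := by
    apply strictMono_nat_of_lt_succ
    intro k
    exact ((f k).2.2.2.2 _ (hmemT k)).1
  exact ⟨φ, hmono, fun l k hlk => ((f l).2.2.2.2 _ (hkey l k hlk)).2⟩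


theorem stmt16_aux {α : Type*} (θ : TopologicalSpace α) (hθ : Noeth θ) :
    Noeth (subwordTop θ) := by
  classical
  letI T : TopologicalSpace (List α) := subwordTop θ
  suffices hN : NoetherianSpace (List α) by
    intro s
    exact NoetherianSpace.isCompact s
  constructor
  rw [RelEmbedding.wellFounded_iff_isEmpty]
  constructor
  intro g
  -- `g n` is a strictly increasing sequence of opens of the subword topology
  set O : ℕ → Opens (List α) := fun n => g n with hO
  have hOlt : ∀ m n, m < n → O m < O n := by
    intro m n h
    exact g.map_rel_iff.mpr h
  have hOle : ∀ m n, m ≤ n → O m ≤ O n := by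
    intro m n h
    rcases lt_or_eq_of_le h with h | rfl
    · exact (hOlt m n h).le
    · exact le_rfl
  -- pick witnesses
  have hpick : ∀ n, ∃ w : List α, w ∈ (O (n + 1) : Set (List α)) ∧ w ∉ (O n : Set (List α)) := by
    intro n
    obtain ⟨-, x, hx, hx'⟩ := SetLike.lt_iff_le_and_exists.mp (hOlt n (n + 1) (Nat.lt_succ_self n))
    exact ⟨x, hx, hx'⟩
  choose w hw hw' using hpick
  have hbasic : ∀ n, ∃ M : List (Set α), (∀ V ∈ M, θ.IsOpen V) ∧ w n ∈ openword M ∧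
      openword M ⊆ (O (n + 1) : Set (List α)) :=
    fun n => exists_basic θ (O (n + 1)).2 (w n) (hw n)
  choose M hMo hwM hMsub using hbasic
  -- the bad sequence of pairs
  set s : Set (List α × List (Set α)) :=
    {p | (∀ V ∈ p.2, θ.IsOpen V) ∧ p.1 ∈ openword p.2} with hs
  set r : List α × List (Set α) → List α × List (Set α) → Prop :=
    fun p q => q.1 ∈ openword p.2 with hr
  set rk : List α × List (Set α) → ℕ := fun p => p.1.length with hrk
  have hbad0 : Set.PartiallyWellOrderedOn.IsBadSeq r s (fun n => (w n, M n)) := by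
    constructor
    · exact fun n => ⟨hMo n, hwM n⟩
    · intro m n hmn hrel
      exact hw' n (hOle (m + 1) n hmn (hMsub m hrel))
  obtain ⟨p, ⟨hps, hpbad⟩, hmin⟩ :=
    Set.PartiallyWellOrderedOn.exists_min_bad_of_exists_bad r rk s ⟨_, hbad0⟩
  -- each word in the minimal bad sequence is nonempty
  have hne : ∀ n, (p n).1 ≠ [] := by
    intro n hnil
    have h1 : (p n).2 = [] := eq_nil_of_nil_mem (hnil ▸ (hps n).2)
    apply hpbad n (n + 1) (Nat.lt_succ_self n)
    show (p (n + 1)).1 ∈ openword (p n).2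
    rw [h1]
    exact mem_openword_nil _
  set a : ℕ → α := fun n => (p n).1.head (hne n) with ha
  set v : ℕ → List α := fun n => (p n).1.tail with hv
  have hav : ∀ n, a n :: v n = (p n).1 := fun n => List.cons_head_tail (hne n)
  -- decomposition interface
  have hdec : ∀ n, ∃ (U : Set α) (K : List (Set α)), θ.IsOpen U ∧ (∀ V ∈ K, θ.IsOpen V) ∧
      a n ∈ U ∧ v n ∈ openword K ∧
      ∀ c u, c ∈ U → u ∈ openword K → (c :: u) ∈ openword (p n).2 := by
    intro n
    have hmem : (a n :: v n) ∈ openword (p n).2 := by rw [hav n]; exact (hps n).2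
    rcases cons_mem_openword_cases hmem with h1 | ⟨U, L', hL, haU, hvL⟩
    · exact ⟨Set.univ, (p n).2, isOpen_univ, (hps n).1, trivial, h1,
        fun c u _ hu => cons_mem_openword_of_mem hu⟩
    · refine ⟨U, L', ?_, ?_, haU, hvL, ?_⟩
      · exact (hps n).1 U (hL ▸ List.mem_cons_self)
      · exact fun V hV => (hps n).1 V (hL ▸ List.mem_cons_of_mem _ hV)
      · intro c u hc hu
        rw [hL]
        exact cons_mem_openword_cons hc hu
  choose U K hUo hKo haU hvK himp using hdec
  -- greedy extraction on letters
  obtain ⟨φ, hφmono, hφ⟩ := greedy θ hθ a U hUo haU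
  set n₀ : ℕ := φ 0 with hn₀
  -- the competing sequence
  set z : ℕ → List α × List (Set α) :=
    fun j => if j < n₀ then p j else (v (φ (j - n₀)), K (φ (j - n₀))) with hz
  have hz_lt : ∀ j, j < n₀ → z j = p j := fun j hj => if_pos hj
  have hz_ge : ∀ j, n₀ ≤ j → z j = (v (φ (j - n₀)), K (φ (j - n₀))) :=
    fun j hj => if_neg (not_lt.mpr hj)
  have hrank : rk (z n₀) < rk (p n₀) := by
    rw [hz_ge n₀ le_rfl, Nat.sub_self]
    show (v (φ 0)).length < (p n₀).1.length
    rw [← hav n₀, hn₀]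
    simp [Nat.lt_succ_self]
  have hagree : ∀ m, m < n₀ → p m = z m := fun m hm => (hz_lt m hm).symm
  have hznotbad := hmin n₀ z hagree hrank
  rw [Set.PartiallyWellOrderedOn.IsBadSeq] at hznotbad
  push_neg at hznotbad
  have hzs : ∀ j, z j ∈ s := by
    intro j
    rcases lt_or_ge j n₀ with hj | hj
    · rw [hz_lt j hj]; exact hps j
    · rw [hz_ge j hj]; exact ⟨hKo _, hvK _⟩
  obtain ⟨i, j, hij, hrel⟩ := hznotbad hzs
  -- case analysis
  rcases lt_or_ge j n₀ with hjn | hjn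
  · have hin : i < n₀ := lt_trans hij hjn
    rw [hz_lt i hin, hz_lt j hjn] at hrel
    exact hpbad i j hij hrel
  · rcases lt_or_ge i n₀ with hin | hin
    · rw [hz_lt i hin, hz_ge j hjn] at hrel
      -- hrel : v (φ (j - n₀)) ∈ openword (p i).2
      have h2 : (p (φ (j - n₀))).1 ∈ openword (p i).2 := by
        rw [← hav (φ (j - n₀))]
        exact cons_mem_openword_of_mem hrel
      have hlt : i < φ (j - n₀) := lt_of_lt_of_le hin (hn₀ ▸ hφmono.monotone (Nat.zero_le _))
      exact hpbad i (φ (j - n₀)) hlt h2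
    · rw [hz_ge i hin, hz_ge j hjn] at hrel
      set l : ℕ := i - n₀ with hl
      set k : ℕ := j - n₀ with hk
      have hlk : l < k := by
        apply Nat.sub_lt_sub_right hin hij
      -- hrel : v (φ k) ∈ openword (K (φ l))
      have hletter : a (φ k) ∈ U (φ l) := hφ l k hlk
      have h2 : (p (φ k)).1 ∈ openword (p (φ l)).2 := by
        rw [← hav (φ k)]
        exact himp (φ l) _ _ hletter hrel
      exact hpbad (φ l) (φ k) (hφmono hlk) h2


end Hig

/-- Topological Higman lemma. -/
theorem stmt16 {α : Type*} (θ : TopologicalSpace α) (hθ : Noeth θ) :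
    Noeth (subwordTop θ) :=
  Hig.stmt16_aux θ hθ
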